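/- Let X be a set, 𝓕 a clone on X, and r ≥ 3 an integer such that g_{r;1,2} ∈ 𝓕. Then g_{s;1,2} ∈ 𝓕 for every integer s ≥ r. -/

import Mathlib

/-- `F` is a clone on `X`. -/
def IsClone {X : Type*} (F : ∀ n : ℕ, Set ((Fin n → X) → X)) : Prop :=
  (∀ n : ℕ, ∀ i : Fin n, (fun x : Fin n → X => x i) ∈ F n) ∧
  (∀ n m : ℕ, 0 < n → 0 < m → ∀ f ∈ F n, ∀ g : Fin n → (Fin m → X) → X,
    (∀ i, g i ∈ F m) → (fun x : Fin m → X => f fun i => g i x) ∈ F m)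

/-- The function `g_{r;1,2} : Xʳ → X`: it returns the second coordinate if all
coordinates except possibly the first are equal, and the first coordinate
otherwise. -/
noncomputable def gFun {X : Type*} (r : ℕ) [NeZero r] (x : Fin r → X) : X :=
  haveI := Classical.propDecidable (∀ i : Fin r, i ≠ 0 → x i = x 1)
  if ∀ i : Fin r, i ≠ 0 → x i = x 1 then x 1 else x 0

lemma gFun_pos {X : Type*} (n : ℕ) [NeZero n] (x : Fin n → X)
    (h : ∀ i : Fin n, i ≠ 0 → x i = x 1) : gFun n x = x 1 := by
  unfold gFun; rw [if_pos h]

lemma gFun_neg {X : Type*} (n : ℕ) [NeZero n] (x : Fin n → X)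
    (h : ¬ ∀ i : Fin n, i ≠ 0 → x i = x 1) : gFun n x = x 0 := by
  unfold gFun; rw [if_neg h]

lemma fin_val_one (n : ℕ) [NeZero n] (h : 2 ≤ n) : ((1 : Fin n) : ℕ) = 1 := by
  rw [Fin.val_one']; exact Nat.mod_eq_of_lt h

/-- The key pointwise identity:
`g_{s+1}(x) = g_s(x₀, …, x_{s-2}, g_r(x₀, x_{s-1}, x_s, …, x_s))`. -/
lemma gFun_key {X : Type*} (s r : ℕ) [NeZero s] [NeZero r] (h3 : 3 ≤ s) (hr : 3 ≤ r)
    (hrs : r ≤ s) (x : Fin (s+1) → X) :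
    gFun s (fun i : Fin s =>
      if (i : ℕ) < s - 1 then x (Fin.castSucc i)
      else gFun r (fun j : Fin r =>
        x (if (j : ℕ) = 0 then 0 else if (j : ℕ) = 1 then ⟨s-1, by omega⟩ else Fin.last s)))
      = gFun (s+1) x := by
  have hv1r : ((1 : Fin r) : ℕ) = 1 := fin_val_one r (by omega)
  have hv1s : ((1 : Fin s) : ℕ) = 1 := fin_val_one s (by omega)
  have hv1s1 : ((1 : Fin (s+1)) : ℕ) = 1 := fin_val_one (s+1) (by omega)
  set c : Fin r → Fin (s+1) := fun j =>
    if (j : ℕ) = 0 then 0 else if (j : ℕ) = 1 then ⟨s-1, by omega⟩ else Fin.last s with hc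
  have hc0 : c 0 = 0 := by simp [hc]
  have hc1 : c 1 = ⟨s-1, by omega⟩ := by
    simp only [hc]
    rw [if_neg (by simp [hv1r]; omega), if_pos hv1r]
  have hc2 : ∀ j : Fin r, 2 ≤ (j : ℕ) → c j = Fin.last s := by
    intro j hj
    simp only [hc]
    rw [if_neg (by omega), if_neg (by omega)]
  set z : Fin s → X := fun i : Fin s =>
    if (i : ℕ) < s - 1 then x (Fin.castSucc i) else gFun r (fun j => x (c j)) with hz
  have hzlt : ∀ i : Fin s, (i : ℕ) < s - 1 → z i = x ⟨(i:ℕ), by omega⟩ := by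
    intro i hi
    simp only [hz, if_pos hi]
    congr 1
  have hz1 : z 1 = x 1 := by
    rw [hzlt 1 (by omega)]
    congr 1
    ext
    show ((1 : Fin s) : ℕ) = ((1 : Fin (s+1)) : ℕ)
    rw [hv1s, hv1s1]
  have hz0 : z 0 = x 0 := by
    have h := hzlt ⟨0, by omega⟩ (show (0:ℕ) < s - 1 by omega)
    convert h using 2 <;> (ext; simp)
  have hlast : z ⟨s-1, by omega⟩ = gFun r (fun j => x (c j)) := by
    simp only [hz]
    rw [if_neg (by simp)]
  -- the inner value when x (last) = x ⟨s-1⟩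
  have hinner_eq : x (Fin.last s) = x ⟨s-1, by omega⟩ →
      gFun r (fun j => x (c j)) = x ⟨s-1, by omega⟩ := by
    intro hse
    rw [gFun_pos r _ ?_, hc1]
    intro j hj
    rw [hc1]
    rcases Nat.lt_or_ge (j : ℕ) 2 with hj2 | hj2
    · have hjv : (j : ℕ) = 1 := by
        rcases Nat.eq_or_lt_of_le (Nat.zero_le (j : ℕ)) with h0 | h1
        · exact absurd (Fin.ext h0.symm) hj
        · omega
      have : j = 1 := Fin.ext (by rw [hv1r]; exact hjv)
      rw [this, hc1]
    · rw [hc2 j hj2, hse]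
  -- the inner value when x (last) ≠ x ⟨s-1⟩
  have hinner_ne : x (Fin.last s) ≠ x ⟨s-1, by omega⟩ →
      gFun r (fun j => x (c j)) = x 0 := by
    intro hse
    rw [gFun_neg r _ ?_, hc0]
    intro hall
    apply hse
    have := hall ⟨2, by omega⟩ (by
      intro hh
      have : ((⟨2, by omega⟩ : Fin r) : ℕ) = ((0 : Fin r) : ℕ) := by rw [hh]
      simp at this)
    rw [hc1, hc2 ⟨2, by omega⟩ (by norm_num)] at this
    exact this
  show gFun s z = gFun (s+1) x
  by_cases hP : ∀ i : Fin (s+1), i ≠ 0 → x i = x 1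
  · rw [gFun_pos (s+1) x hP]
    have hse : x (Fin.last s) = x ⟨s-1, by omega⟩ := by
      rw [hP (Fin.last s) (Fin.ne_of_val_ne (by simp; omega)),
        hP ⟨s-1, by omega⟩ (Fin.ne_of_val_ne (by simp; omega))]
    have hw : gFun r (fun j => x (c j)) = x 1 := by
      rw [hinner_eq hse]
      exact hP ⟨s-1, by omega⟩ (Fin.ne_of_val_ne (by simp; omega))
    have hR : ∀ i : Fin s, i ≠ 0 → z i = z 1 := by
      intro i hi
      rw [hz1]
      by_cases hil : (i : ℕ) < s - 1
      · rw [hzlt i hil]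
        have hiv : (i:ℕ) ≠ 0 := by intro h0; apply hi; ext; simp [h0]
        exact hP ⟨(i:ℕ), by omega⟩ (Fin.ne_of_val_ne (by simpa using hiv))
      · have : i = ⟨s-1, by omega⟩ := by
          ext; simp only []; omega
        rw [this, hlast, hw]
    rw [gFun_pos s z hR, hz1]
  · rw [gFun_neg (s+1) x hP]
    by_cases hR : ∀ i : Fin s, i ≠ 0 → z i = z 1
    · rw [gFun_pos s z hR, hz1]
      have hs1ne : (⟨s-1, by omega⟩ : Fin s) ≠ 0 :=
        Fin.ne_of_val_ne (by simp; omega)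
      have hwz : gFun r (fun j => x (c j)) = x 1 := by
        rw [← hlast, hR _ hs1ne, hz1]
      by_cases hse : x (Fin.last s) = x ⟨s-1, by omega⟩
      · exfalso
        apply hP
        intro i hi
        have hiv : (i : ℕ) ≠ 0 := by intro h0; apply hi; ext; simp [h0]
        rcases Nat.lt_or_ge (i : ℕ) (s-1) with hil | hil
        · have hiz : z ⟨(i:ℕ), by omega⟩ = x i := by
            rw [hzlt ⟨(i:ℕ), by omega⟩ hil]
          rw [← hiz, hR _ (Fin.ne_of_val_ne (by simpa using hiv)), hz1]
        · have hx1 : x ⟨s-1, by omega⟩ = x 1 := by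
            rw [← hinner_eq hse, hwz]
          have : (i : ℕ) = s - 1 ∨ (i : ℕ) = s := by omega
          rcases this with h1 | h1
          · rw [show i = ⟨s-1, by omega⟩ from Fin.ext h1, hx1]
          · rw [show i = Fin.last s from Fin.ext h1, hse, hx1]
      · rw [← hwz, hinner_ne hse]
    · rw [gFun_neg s z hR, hz0]

theorem stmt4 {X : Type*} (F : ∀ n : ℕ, Set ((Fin n → X) → X)) (hF : IsClone F)
    (r : ℕ) (hr : 3 ≤ r)
    (h : @gFun X r ⟨by omega⟩ ∈ F r) :
    ∀ s : ℕ, ∀ _hs : r ≤ s, @gFun X s ⟨by omega⟩ ∈ F s := by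
  intro s hs
  induction s, hs using Nat.le_induction with
  | base => exact h
  | succ s hs ih =>
    have h3 : 3 ≤ s := le_trans hr hs
    haveI hns : NeZero s := ⟨by omega⟩
    haveI : NeZero (s+1) := ⟨by omega⟩
    haveI hnr : NeZero r := ⟨by omega⟩
    have hgs : @gFun X s hns ∈ F s := ih
    set c : Fin r → Fin (s+1) := fun j =>
      if (j : ℕ) = 0 then 0 else if (j : ℕ) = 1 then ⟨s-1, by omega⟩ else Fin.last s with hc
    have hinner : (fun x : Fin (s+1) → X => gFun r (fun j => x (c j))) ∈ F (s+1) :=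
      hF.2 r (s+1) (by omega) (by omega) _ h (fun j x => x (c j))
        (fun j => hF.1 (s+1) (c j))
    set G : Fin s → (Fin (s+1) → X) → X := fun i =>
      if (i : ℕ) < s - 1 then (fun x => x (Fin.castSucc i))
      else (fun x => gFun r (fun j => x (c j))) with hG
    have hGmem : ∀ i, G i ∈ F (s+1) := by
      intro i
      rw [hG]
      by_cases hi : (i : ℕ) < s - 1
      · simpa [hi] using hF.1 (s+1) (Fin.castSucc i)
      · simpa [hi] using hinner
    have hcomp : (fun x : Fin (s+1) → X => gFun s (fun i => G i x)) ∈ F (s+1) :=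
      hF.2 s (s+1) (by omega) (by omega) _ hgs G hGmem
    have key : (fun x : Fin (s+1) → X => gFun s (fun i => G i x)) = gFun (s+1) := by
      funext x
      have := gFun_key s r h3 hr hs x
      rw [← this]
      congr 1
      funext i
      simp only [hG, hc]
      by_cases hi : (i : ℕ) < s - 1 <;> simp [hi]
    rw [key] at hcomp
    exact hcomp
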